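/- For every nonnegative integer n, ∑_{k=0}^{n} k³·H_{n-k}² = (n²(n+1)²/4)·H_{n+1}² − (1/24)·n(n+1)(25n²+37n+10)·H_{n+1} + (1/288)·n(n+1)(415n²+427n+130). -/
import Mathlib

open Finset

/-- The harmonic number `H n = ∑_{k=1}^n 1/k`. -/
def H (n : ℕ) : ℚ := ∑ k ∈ Finset.range n, (1 : ℚ) / ((k : ℚ) + 1)

/-- The generalized harmonic number `H n ^ (m) = ∑_{k=1}^n 1/k^m`. -/
def Hgen (m n : ℕ) : ℚ := ∑ k ∈ Finset.range n, (1 : ℚ) / ((k : ℚ) + 1) ^ m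

lemma Hsucc (n : ℕ) : H (n + 1) = H n + 1 / ((n : ℚ) + 1) := by
  simp [H, Finset.sum_range_succ]

lemma A0 (n : ℕ) : ∑ j ∈ Finset.range (n + 1), (H j) ^ 2 =
    ((n : ℚ) + 1) * (H (n + 1)) ^ 2 - (2 * n + 3) * H (n + 1) + (2 * n + 2) := by
  induction n with
  | zero => norm_num [H, Finset.sum_range_succ]
  | succ n ih =>
    have hne : (n : ℚ) + 2 ≠ 0 := by positivity
    rw [Finset.sum_range_succ, ih, show n + 1 + 1 = n + 2 from rfl, Hsucc (n + 1)]
    push_cast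
    field_simp
    ring

lemma A1 (n : ℕ) : ∑ j ∈ Finset.range (n + 1), (j : ℚ) * (H j) ^ 2 =
    ((n : ℚ) / 2 + (n : ℚ) ^ 2 / 2) * (H (n + 1)) ^ 2
      + (1 / 2 - (n : ℚ) / 2 - (n : ℚ) ^ 2 / 2) * H (n + 1)
      + (-1 / 2 - (n : ℚ) / 4 + (n : ℚ) ^ 2 / 4) := by
  induction n with
  | zero => norm_num [H, Finset.sum_range_succ]
  | succ n ih =>
    have hne : (n : ℚ) + 2 ≠ 0 := by positivity
    rw [Finset.sum_range_succ, ih, show n + 1 + 1 = n + 2 from rfl, Hsucc (n + 1)]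
    push_cast
    field_simp
    ring

lemma A2 (n : ℕ) : ∑ j ∈ Finset.range (n + 1), (j : ℚ) ^ 2 * (H j) ^ 2 =
    ((n : ℚ) / 6 + (n : ℚ) ^ 2 / 2 + (n : ℚ) ^ 3 / 3) * (H (n + 1)) ^ 2
      + (-1 / 6 - 5 * (n : ℚ) / 18 - (n : ℚ) ^ 2 / 2 - 2 * (n : ℚ) ^ 3 / 9) * H (n + 1)
      + (1 / 6 + 19 * (n : ℚ) / 108 + (n : ℚ) ^ 2 / 12 + 2 * (n : ℚ) ^ 3 / 27) := by
  induction n with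
  | zero => norm_num [H, Finset.sum_range_succ]
  | succ n ih =>
    have hne : (n : ℚ) + 2 ≠ 0 := by positivity
    rw [Finset.sum_range_succ, ih, show n + 1 + 1 = n + 2 from rfl, Hsucc (n + 1)]
    push_cast
    field_simp
    ring

lemma A3 (n : ℕ) : ∑ j ∈ Finset.range (n + 1), (j : ℚ) ^ 3 * (H j) ^ 2 =
    ((n : ℚ) ^ 2 / 4 + (n : ℚ) ^ 3 / 2 + (n : ℚ) ^ 4 / 4) * (H (n + 1)) ^ 2
      + (-(n : ℚ) / 12 - 3 * (n : ℚ) ^ 2 / 8 - 5 * (n : ℚ) ^ 3 / 12 - (n : ℚ) ^ 4 / 8) * H (n + 1)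
      + (7 * (n : ℚ) / 144 + 3 * (n : ℚ) ^ 2 / 32 + 11 * (n : ℚ) ^ 3 / 144 + (n : ℚ) ^ 4 / 32) := by
  induction n with
  | zero => norm_num [H, Finset.sum_range_succ]
  | succ n ih =>
    have hne : (n : ℚ) + 2 ≠ 0 := by positivity
    rw [Finset.sum_range_succ, ih, show n + 1 + 1 = n + 2 from rfl, Hsucc (n + 1)]
    push_cast
    field_simp
    ring

theorem stmt16 (n : ℕ) :
    ∑ k ∈ Finset.range (n + 1), (k : ℚ) ^ 3 * (H (n - k)) ^ 2 =
      ((n : ℚ) ^ 2 * ((n : ℚ) + 1) ^ 2 / 4) * (H (n + 1)) ^ 2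
        - (1 / 24) * (n : ℚ) * ((n : ℚ) + 1) * (25 * (n : ℚ) ^ 2 + 37 * (n : ℚ) + 10) * H (n + 1)
        + (1 / 288) * (n : ℚ) * ((n : ℚ) + 1) * (415 * (n : ℚ) ^ 2 + 427 * (n : ℚ) + 130) := by
  have refl : ∑ k ∈ Finset.range (n + 1), (k : ℚ) ^ 3 * (H (n - k)) ^ 2 =
      ∑ j ∈ Finset.range (n + 1), ((n : ℚ) - (j : ℚ)) ^ 3 * (H j) ^ 2 := by
    rw [← Finset.sum_range_reflect (fun k => (k : ℚ) ^ 3 * (H (n - k)) ^ 2) (n + 1)]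
    apply Finset.sum_congr rfl
    intro j hj
    have hj' : j ≤ n := by simpa using Nat.lt_succ_iff.mp (Finset.mem_range.mp hj)
    have h1 : n + 1 - 1 - j = n - j := by omega
    have h2 : n - (n - j) = j := by omega
    rw [h1, h2, Nat.cast_sub hj']
  rw [refl]
  have expand : ∑ j ∈ Finset.range (n + 1), ((n : ℚ) - (j : ℚ)) ^ 3 * (H j) ^ 2 =
      (n : ℚ) ^ 3 * (∑ j ∈ Finset.range (n + 1), (H j) ^ 2)
        - 3 * (n : ℚ) ^ 2 * (∑ j ∈ Finset.range (n + 1), (j : ℚ) * (H j) ^ 2)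
        + 3 * (n : ℚ) * (∑ j ∈ Finset.range (n + 1), (j : ℚ) ^ 2 * (H j) ^ 2)
        - ∑ j ∈ Finset.range (n + 1), (j : ℚ) ^ 3 * (H j) ^ 2 := by
    simp only [Finset.mul_sum, ← Finset.sum_sub_distrib, ← Finset.sum_add_distrib]
    exact Finset.sum_congr rfl fun j _ => by ring
  rw [expand, A0, A1, A2, A3]
  ring
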